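/- Let N ≥ 0 be an integer and let z ∈ ℂ with 0 < |z| ≤ 1/2. Then ∫_{ {w ∈ ℂ : |w − z| ≤ |z|/2} } (−log|w|)^{−N} / ( |z − w| · |w| ) dλ(w) ≤ 2π · (−log(3|z|/2))^{−N}. (Note that on this region |z|/2 ≤ |w| ≤ 3|z|/2 ≤ 3/4 < 1, so −log|w| ≥ −log(3|z|/2) > 0.) -/

import Mathlib

open MeasureTheory Set Metric
open scoped Real

noncomputable section


lemma polar_key (r : ℝ) (hr : 0 < r) :
    Integrable ((Metric.closedBall (0:ℂ) r).indicator (fun w => (‖w‖)⁻¹)) ∧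
    (∫ w : ℂ, (Metric.closedBall (0:ℂ) r).indicator (fun w => (‖w‖)⁻¹) w)
      = 2 * Real.pi * r := by
  set F : ℂ → ℝ := (Metric.closedBall (0:ℂ) r).indicator (fun w => (‖w‖)⁻¹) with hF
  set T : Set (ℝ × ℝ) := Set.Ioc 0 r ×ˢ Set.Ioo (-π) π with hT
  have hTmeas : MeasurableSet T := measurableSet_Ioc.prod measurableSet_Ioo
  have hTsub : T ⊆ polarCoord.target := by
    rintro ⟨a, b⟩ ⟨ha, hb⟩
    exact ⟨ha.1, hb⟩
  have hTvol : volume T = ENNReal.ofReal r * ENNReal.ofReal (2 * π) := by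
    rw [hT, Measure.volume_eq_prod, Measure.prod_prod, Real.volume_Ioc, Real.volume_Ioo]
    congr 2 <;> ring
  have hpt : ∀ p ∈ polarCoord.target, p.1 • F (Complex.polarCoord.symm p)
      = T.indicator (fun _ => (1:ℝ)) p := by
    rintro ⟨a, b⟩ hp
    have ha : 0 < a := hp.1
    have habs : ‖Complex.polarCoord.symm (a, b)‖ = |a| :=
      Complex.norm_polarCoord_symm (a, b)
    have hmem : Complex.polarCoord.symm (a, b) ∈ Metric.closedBall (0:ℂ) r ↔ a ≤ r := by
      rw [Metric.mem_closedBall, Complex.dist_eq, sub_zero, habs, abs_of_pos ha]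
    by_cases h : a ≤ r
    · have h1 : F (Complex.polarCoord.symm (a, b)) = a⁻¹ := by
        rw [hF, Set.indicator_of_mem (hmem.2 h), habs, abs_of_pos ha]
      have h2 : (a, b) ∈ T := ⟨⟨ha, h⟩, hp.2⟩
      rw [h1, Set.indicator_of_mem h2]
      simp [smul_eq_mul, mul_inv_cancel₀ ha.ne']
    · have h1 : F (Complex.polarCoord.symm (a, b)) = 0 :=
        Set.indicator_of_notMem (fun hm => h (hmem.1 hm)) _
      have h2 : (a, b) ∉ T := fun hm => h hm.1.2
      rw [h1, Set.indicator_of_notMem h2]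
      simp
  constructor
  · -- integrability
    rw [← (Complex.volume_preserving_equiv_real_prod.symm).integrable_comp_emb
      Complex.measurableEquivRealProd.symm.measurableEmbedding]
    set G : ℝ × ℝ → ℝ := F ∘ Complex.measurableEquivRealProd.symm with hG
    have e1 : IntegrableOn G polarCoord.source ↔ IntegrableOn G univ := by
      unfold IntegrableOn
      rw [Measure.restrict_congr_set polarCoord_source_ae_eq_univ]
    rw [← integrableOn_univ, ← e1, ← polarCoord.symm_image_target_eq_source]
    set B : ℝ × ℝ → ℝ × ℝ →L[ℝ] ℝ × ℝ := fun p =>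
      LinearMap.toContinuousLinearMap (Matrix.toLin (Module.Basis.finTwoProd ℝ) (Module.Basis.finTwoProd ℝ)
        !![Real.cos p.2, -p.1 * Real.sin p.2; Real.sin p.2, p.1 * Real.cos p.2]) with hB
    have B_det : ∀ p, (B p).det = p.1 := by
      intro p
      conv_rhs => rw [← one_mul p.1, ← Real.cos_sq_add_sin_sq p.2]
      simp only [hB, neg_mul, LinearMap.det_toContinuousLinearMap, LinearMap.det_toLin,
        Matrix.det_fin_two_of, sub_neg_eq_add]
      ring
    rw [integrableOn_image_iff_integrableOn_abs_det_fderiv_smul volume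
      polarCoord.open_target.measurableSet
      (fun p _ => (hasFDerivAt_polarCoord_symm p).hasFDerivWithinAt)
      (polarCoord.symm.injOn.mono (by rw [polarCoord.symm_source])) G]
    have : IntegrableOn (T.indicator (fun _ => (1:ℝ))) polarCoord.target := by
      apply Integrable.integrableOn
      rw [integrable_indicator_iff hTmeas]
      refine (integrableOn_const_iff (by simp)).2 (Or.inr ?_)
      rw [hTvol]
      exact ENNReal.mul_lt_top ENNReal.ofReal_lt_top ENNReal.ofReal_lt_top
    refine this.congr_fun (fun p hp => ?_) polarCoord.open_target.measurableSet
    have : G (polarCoord.symm p) = F (Complex.polarCoord.symm p) := rfl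
    rw [this, ← hpt p hp, det_fderivPolarCoordSymm, abs_of_pos hp.1]
  · -- value
    rw [← Complex.integral_comp_polarCoord_symm F,
      setIntegral_congr_fun polarCoord.open_target.measurableSet hpt,
      setIntegral_indicator hTmeas,
      Set.inter_eq_self_of_subset_right hTsub, setIntegral_const,
      measureReal_def, hTvol, smul_eq_mul, mul_one, ENNReal.toReal_mul,
      ENNReal.toReal_ofReal hr.le, ENNReal.toReal_ofReal (by positivity)]
    ring

lemma ball_key (z : ℂ) (r : ℝ) (hr : 0 < r)
    :
    IntegrableOn (fun w : ℂ => (‖w - z‖)⁻¹) (Metric.closedBall z r) ∧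
    (∫ w in Metric.closedBall z r, (‖w - z‖)⁻¹) = 2 * Real.pi * r := by
  have hpol := polar_key r hr
  have hind : ∀ w : ℂ,
      (Metric.closedBall (0:ℂ) r).indicator (fun u => (‖u‖)⁻¹) (w - z)
        = (Metric.closedBall z r).indicator (fun u => (‖u - z‖)⁻¹) w := by
    intro w
    have hmem : w - z ∈ Metric.closedBall (0:ℂ) r ↔ w ∈ Metric.closedBall z r := by
      rw [Metric.mem_closedBall, Metric.mem_closedBall, Complex.dist_eq, Complex.dist_eq,
        sub_zero]
    by_cases h : w ∈ Metric.closedBall z r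
    · rw [Set.indicator_of_mem (hmem.2 h), Set.indicator_of_mem h]
    · rw [Set.indicator_of_notMem (fun hm => h (hmem.1 hm)),
        Set.indicator_of_notMem h]
  have hint : Integrable
      ((Metric.closedBall z r).indicator (fun u : ℂ => (‖u - z‖)⁻¹)) := by
    have := hpol.1.comp_sub_right z
    simpa only [hind] using this
  constructor
  · exact (integrable_indicator_iff measurableSet_closedBall).1 hint
  · rw [← integral_indicator measurableSet_closedBall]
    calc (∫ w : ℂ, (Metric.closedBall z r).indicator (fun u => (‖u - z‖)⁻¹) w)
        = ∫ w : ℂ, (Metric.closedBall (0:ℂ) r).indicator (fun u => (‖u‖)⁻¹) (w - z) := by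
          simp only [hind]
      _ = ∫ w : ℂ, (Metric.closedBall (0:ℂ) r).indicator (fun u => (‖u‖)⁻¹) w :=
          integral_sub_right_eq_self _ z
      _ = 2 * Real.pi * r := hpol.2


theorem statement9 (N : ℕ) (z : ℂ) (hz0 : 0 < ‖z‖) (hz : ‖z‖ ≤ 1 / 2) :
    (∫ w in {w : ℂ | ‖w - z‖ ≤ ‖z‖ / 2},
        (-Real.log (‖w‖)) ^ (-(N : ℝ)) / (‖z - w‖ * ‖w‖)) ≤
      2 * Real.pi * (-Real.log (3 * ‖z‖ / 2)) ^ (-(N : ℝ)) := by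
  have hkey := ball_key z (‖z‖ / 2) (by positivity)
  have hS : {w : ℂ | ‖w - z‖ ≤ ‖z‖ / 2}
      = Metric.closedBall z (‖z‖ / 2) := by
    ext w; simp [Metric.mem_closedBall, Complex.dist_eq]
  rw [hS]
  set r := ‖z‖ / 2 with hrdef
  have hr : 0 < r := by positivity
  set C := (-Real.log (3 * ‖z‖ / 2)) ^ (-(N : ℝ)) with hC
  have hBpos : 0 < -Real.log (3 * ‖z‖ / 2) := by
    have h1 : 3 * ‖z‖ / 2 < 1 := by linarith
    have := Real.log_neg (by positivity) h1
    linarith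
  have hC0 : 0 ≤ C := Real.rpow_nonneg hBpos.le _
  set f : ℂ → ℝ := fun w =>
    (-Real.log (‖w‖)) ^ (-(N : ℝ)) / (‖z - w‖ * ‖w‖) with hf
  set g : ℂ → ℝ := fun w => C * (2 / ‖z‖) * (‖w - z‖)⁻¹ with hg
  have hgint : IntegrableOn g (Metric.closedBall z r) := hkey.1.const_mul _
  -- pointwise facts on the ball
  have hball : ∀ w ∈ Metric.closedBall z r,
      ‖z‖ / 2 ≤ ‖w‖ ∧ ‖w‖ ≤ 3 * ‖z‖ / 2 := by
    intro w hw
    rw [Metric.mem_closedBall, Complex.dist_eq] at hw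
    have h1 : ‖z‖ ≤ ‖z - w‖ + ‖w‖ := by
      have := norm_add_le (z - w) w
      simpa using this
    have h2 : ‖z - w‖ = ‖w - z‖ := norm_sub_rev z w
    have h3 : ‖w‖ ≤ ‖w - z‖ + ‖z‖ := by
      have := norm_add_le (w - z) z
      simpa using this
    constructor <;> [linarith [h2 ▸ h1]; linarith]
  have hnum : ∀ w ∈ Metric.closedBall z r,
      0 < -Real.log (‖w‖) ∧
      (-Real.log (‖w‖)) ^ (-(N : ℝ)) ≤ C := by
    intro w hw
    obtain ⟨h1, h2⟩ := hball w hw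
    have hw0 : 0 < ‖w‖ := by linarith
    have hlog : Real.log (‖w‖) ≤ Real.log (3 * ‖z‖ / 2) :=
      Real.log_le_log hw0 h2
    have hApos : 0 < -Real.log (‖w‖) := lt_of_lt_of_le hBpos (by linarith)
    exact ⟨hApos, Real.rpow_le_rpow_of_nonpos hBpos (by linarith)
      (by simp [neg_nonpos])⟩
  have hfnonneg : ∀ w ∈ Metric.closedBall z r, 0 ≤ f w := by
    intro w hw
    have := (hnum w hw).1
    exact div_nonneg (Real.rpow_nonneg this.le _) (by positivity)
  have hmono : ∀ w ∈ Metric.closedBall z r, f w ≤ g w := by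
    intro w hw
    obtain ⟨h1, h2⟩ := hball w hw
    obtain ⟨hApos, hnle⟩ := hnum w hw
    have hw0 : 0 < ‖w‖ := by linarith
    have hzw : ‖z - w‖ = ‖w - z‖ := norm_sub_rev z w
    by_cases hwz : w = z
    · simp [hf, hg, hwz, sub_self]
    · have hd : 0 < ‖w - z‖ := by
        simp [norm_pos_iff, sub_eq_zero, hwz]
      have step1 : f w ≤ C / (‖w - z‖ * ‖w‖) := by
        rw [hf]
        simp only [hzw]
        exact (div_le_div_iff_of_pos_right (mul_pos hd hw0)).2 hnle
      have step2 : C / (‖w - z‖ * ‖w‖)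
          ≤ C * (2 / ‖z‖) * (‖w - z‖)⁻¹ := by
        rw [div_eq_mul_inv, mul_inv]
        have hinv : (‖w‖)⁻¹ ≤ 2 / ‖z‖ := by
          rw [div_eq_mul_inv]
          have : (‖w‖)⁻¹ ≤ (‖z‖ / 2)⁻¹ := by
            apply inv_anti₀ (by positivity) h1
          calc (‖w‖)⁻¹ ≤ (‖z‖ / 2)⁻¹ := this
            _ = 2 * (‖z‖)⁻¹ := by rw [div_eq_mul_inv, mul_inv, inv_inv]; ring
        calc C * ((‖w - z‖)⁻¹ * (‖w‖)⁻¹)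
            = C * (‖w‖)⁻¹ * (‖w - z‖)⁻¹ := by ring
          _ ≤ C * (2 / ‖z‖) * (‖w - z‖)⁻¹ := by
              gcongr
      exact le_trans step1 step2
  have hfmeas : AEStronglyMeasurable f (volume.restrict (Metric.closedBall z r)) := by
    apply Measurable.aestronglyMeasurable
    apply Measurable.div
    · exact ((Real.measurable_log.comp continuous_norm.measurable).neg).pow measurable_const
    · exact ((continuous_norm.comp (continuous_const.sub continuous_id)).measurable).mul
        continuous_norm.measurable
  have hfint : IntegrableOn f (Metric.closedBall z r) := by
    apply Integrable.mono' hgint hfmeas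
    filter_upwards [ae_restrict_mem measurableSet_closedBall] with w hw
    rw [Real.norm_eq_abs, abs_of_nonneg (hfnonneg w hw)]
    exact hmono w hw
  calc (∫ w in Metric.closedBall z r, f w)
      ≤ ∫ w in Metric.closedBall z r, g w :=
        setIntegral_mono_on hfint hgint measurableSet_closedBall hmono
    _ = C * (2 / ‖z‖) * ∫ w in Metric.closedBall z r, (‖w - z‖)⁻¹ :=
        integral_const_mul _ _
    _ = C * (2 / ‖z‖) * (2 * Real.pi * (‖z‖ / 2)) := by rw [hkey.2]
    _ = 2 * Real.pi * C := by field_simp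

end
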